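/- Let Γ ⊆ ℝ³ be the closed curve Γ = {(cos t, sin t, t) : t ∈ [0, 2π]} ∪ {(1, 0, s) : s ∈ [0, 2π]}. Then Γ contains exactly one inscribed rhombus: the points y₁ = (0, 1, π/2), y₂ = (−1, 0, π), y₃ = (0, −1, 3π/2), y₄ = (1, 0, π) are consecutive vertices of a rhombus, and every 4-tuple of pairwise distinct points of Γ forming the consecutive vertices of a rhombus has {y₁, y₂, y₃, y₄} = {(0,1,π/2), (−1,0,π), (0,−1,3π/2), (1,0,π)} as its vertex set. -/

import Mathlib

open Real

noncomputable section

/-- One full turn of the unit helix. -/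
def helix (t : ℝ) : EuclideanSpace ℝ (Fin 3) := !₂[Real.cos t, Real.sin t, t]

/-- The vertical segment joining the endpoints of one turn of the helix. -/
def vseg (s : ℝ) : EuclideanSpace ℝ (Fin 3) := !₂[1, 0, s]

/-- The closed curve obtained as the union of one turn of the helix and the vertical
segment joining its endpoints. -/
def helixCurve : Set (EuclideanSpace ℝ (Fin 3)) :=
  helix '' Set.Icc 0 (2 * π) ∪ vseg '' Set.Icc 0 (2 * π)

/-- `y₁, y₂, y₃, y₄` are the consecutive vertices of a rhombus. -/
def IsRhombus (y₁ y₂ y₃ y₄ : EuclideanSpace ℝ (Fin 3)) : Prop :=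
  y₁ ≠ y₂ ∧ y₁ ≠ y₃ ∧ y₁ ≠ y₄ ∧ y₂ ≠ y₃ ∧ y₂ ≠ y₄ ∧ y₃ ≠ y₄ ∧
  y₁ + y₃ = y₂ + y₄ ∧ ‖y₁ - y₂‖ = ‖y₂ - y₃‖

lemma vec3_ext (z : EuclideanSpace ℝ (Fin 3)) (x y w : ℝ)
    (h0 : z 0 = x) (h1 : z 1 = y) (h2 : z 2 = w) : z = !₂[x, y, w] := by
  ext i; fin_cases i <;> simpa

lemma cos_one_cases {d : ℝ} (h1 : -(2*π) ≤ d) (h2 : d ≤ 2*π) (h : Real.cos d = 1) :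
    d = 0 ∨ d = 2*π ∨ d = -(2*π) := by
  obtain ⟨n, hn⟩ := (Real.cos_eq_one_iff d).1 h
  have hπ := Real.pi_pos
  have hn1 : (-1:ℝ) ≤ (n:ℝ) := by nlinarith
  have hn2 : (n:ℝ) ≤ 1 := by nlinarith
  have hn1' : (-1:ℤ) ≤ n := by exact_mod_cast hn1
  have hn2' : n ≤ 1 := by exact_mod_cast hn2
  interval_cases n <;> push_cast at hn <;>
    first
      | (left; linarith)
      | (right; left; linarith)
      | (right; right; linarith)

lemma cos_neg_one_cases {d : ℝ} (h1 : -(2*π) ≤ d) (h2 : d ≤ 2*π) (h : Real.cos d = -1) :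
    d = π ∨ d = -π := by
  have hc : Real.cos (d/2) = 0 := by
    have h0 : Real.cos (d/2) ^ 2 = 0 := by
      rw [Real.cos_sq (d/2)]
      rw [show 2*(d/2) = d by ring, h]; ring
    exact pow_eq_zero_iff (n := 2) (by norm_num) |>.1 h0
  obtain ⟨n, hn⟩ := Real.cos_eq_zero_iff.1 hc
  have hπ := Real.pi_pos
  have hn1 : (-2:ℝ) ≤ (n:ℝ) := by nlinarith
  have hn2 : (n:ℝ) ≤ 1 := by nlinarith
  have hn1' : (-2:ℤ) ≤ n := by exact_mod_cast hn1
  have hn2' : n ≤ 1 := by exact_mod_cast hn2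
  interval_cases n <;> push_cast at hn <;>
    first
      | (left; linarith)
      | (right; linarith)

lemma abs_cos_sub_cos_le (x y : ℝ) : |Real.cos x - Real.cos y| ≤ |x - y| := by
  rw [Real.cos_sub_cos]
  have h1 : |Real.sin ((x+y)/2)| ≤ 1 := abs_le.2 ⟨Real.neg_one_le_sin _, Real.sin_le_one _⟩
  have h2 : |Real.sin ((x-y)/2)| ≤ |(x-y)/2| := Real.abs_sin_le_abs
  have h3 : |(x-y)/2| = |x-y|/2 := by rw [abs_div]; norm_num
  calc |-2 * Real.sin ((x+y)/2) * Real.sin ((x-y)/2)|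
      = 2 * |Real.sin ((x+y)/2)| * |Real.sin ((x-y)/2)| := by
        rw [abs_mul, abs_mul]; norm_num
    _ ≤ 2 * 1 * (|x-y|/2) := by
        rw [← h3]
        apply mul_le_mul (by nlinarith [abs_nonneg (Real.sin ((x+y)/2))]) h2 (abs_nonneg _)
        positivity
    _ = |x - y| := by ring

lemma root1 {u : ℝ} (h : 4 * Real.cos u = π * (2*u - π)) : u = π/2 := by
  have hL := _root_.abs_cos_sub_cos_le u (π/2)
  rw [Real.cos_pi_div_two, sub_zero] at hL
  have hπ : (3:ℝ) < π := Real.pi_gt_three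
  have h4 : |4 * Real.cos u| ≤ 4 * |u - π/2| := by
    rw [abs_mul]; norm_num; nlinarith [abs_nonneg (Real.cos u)]
  rw [h] at h4
  have he : |π * (2*u - π)| = 2*π*|u - π/2| := by
    rw [abs_mul, abs_of_pos Real.pi_pos,
      show (2*u - π) = 2*(u - π/2) by ring, abs_mul]
    simp [abs_of_nonneg]; ring
  rw [he] at h4
  have := abs_nonneg (u - π/2)
  have h0 : |u - π/2| = 0 := by nlinarith
  have := abs_eq_zero.1 h0; linarith

lemma cos_3pi2 : Real.cos (3*π/2) = 0 := by
  rw [show 3*π/2 = π + π/2 by ring, Real.cos_add, Real.cos_pi_div_two, Real.sin_pi_div_two,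
    Real.sin_pi, Real.cos_pi]; ring

lemma sin_3pi2 : Real.sin (3*π/2) = -1 := by
  rw [show 3*π/2 = π + π/2 by ring, Real.sin_add, Real.cos_pi_div_two, Real.sin_pi_div_two,
    Real.sin_pi, Real.cos_pi]; ring

lemma root2 {u : ℝ} (h : 4 * Real.cos u = π * (3*π - 2*u)) : u = 3*π/2 := by
  have hL := _root_.abs_cos_sub_cos_le u (3*π/2)
  rw [cos_3pi2, sub_zero] at hL
  have hπ : (3:ℝ) < π := Real.pi_gt_three
  have h4 : |4 * Real.cos u| ≤ 4 * |u - 3*π/2| := by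
    rw [abs_mul]; norm_num; nlinarith [abs_nonneg (Real.cos u)]
  rw [h] at h4
  have he : |π * (3*π - 2*u)| = 2*π*|u - 3*π/2| := by
    rw [abs_mul, abs_of_pos Real.pi_pos,
      show (3*π - 2*u) = 2*(-(u - 3*π/2)) by ring, abs_mul, abs_neg]
    simp [abs_of_nonneg]; ring
  rw [he] at h4
  have := abs_nonneg (u - 3*π/2)
  have h0 : |u - 3*π/2| = 0 := by nlinarith
  have := abs_eq_zero.1 h0; linarith

lemma planar {a1 b1 a2 b2 a3 b3 a4 b4 : ℝ}
    (u1 : a1^2 + b1^2 = 1) (u2 : a2^2 + b2^2 = 1)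
    (u3 : a3^2 + b3^2 = 1) (u4 : a4^2 + b4^2 = 1)
    (e1 : a1 + a3 = a2 + a4) (e2 : b1 + b3 = b2 + b4) :
    (a1 + a3 = 0 ∧ b1 + b3 = 0) ∨
    (a1 = a2 ∧ b1 = b2 ∧ a3 = a4 ∧ b3 = b4) ∨
    (a1 = a4 ∧ b1 = b4 ∧ a3 = a2 ∧ b3 = b2) := by
  by_cases hm : a1 + a3 = 0 ∧ b1 + b3 = 0
  · exact Or.inl hm
  have o1 : (a1+a3)*(a1-a3) + (b1+b3)*(b1-b3) = 0 := by linear_combination u1 - u3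
  have o2 : (a1+a3)*(a2-a4) + (b1+b3)*(b2-b4) = 0 := by
    linear_combination u2 - u4 + (a2-a4)*e1 + (b2-b4)*e2
  have hR : (a1-a3)^2 + (b1-b3)^2 = (a2-a4)^2 + (b2-b4)^2 := by
    linear_combination 2*u1 + 2*u3 - 2*u2 - 2*u4 - (a1+a3+a2+a4)*e1 - (b1+b3+b2+b4)*e2
  have hD : (a1-a3)*(b2-b4) - (b1-b3)*(a2-a4) = 0 := by
    rcases not_and_or.1 hm with h | h
    · have h1 : (a1+a3)*((a1-a3)*(b2-b4) - (b1-b3)*(a2-a4)) = 0 := by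
        linear_combination (b2-b4)*o1 - (b1-b3)*o2
      rcases mul_eq_zero.1 h1 with h' | h'
      · exact absurd h' h
      · exact h'
    · have h1 : (b1+b3)*((a1-a3)*(b2-b4) - (b1-b3)*(a2-a4)) = 0 := by
        linear_combination (a1-a3)*o2 - (a2-a4)*o1
      rcases mul_eq_zero.1 h1 with h' | h'
      · exact absurd h' h
      · exact h'
  have hS : ((a1-a3)*(a2-a4) + (b1-b3)*(b2-b4))^2 = ((a1-a3)^2 + (b1-b3)^2)^2 := by
    linear_combination (-((a1-a3)^2 + (b1-b3)^2))*hR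
      - ((a1-a3)*(b2-b4) - (b1-b3)*(a2-a4))*hD
  have hfac : (((a1-a3)*(a2-a4) + (b1-b3)*(b2-b4)) - ((a1-a3)^2 + (b1-b3)^2)) *
      (((a1-a3)*(a2-a4) + (b1-b3)*(b2-b4)) + ((a1-a3)^2 + (b1-b3)^2)) = 0 := by
    linear_combination hS
  rcases mul_eq_zero.1 hfac with h | h
  · right; left
    have hw : ((a1-a3) - (a2-a4))^2 + ((b1-b3) - (b2-b4))^2 = 0 := by
      linear_combination -hR - 2*h
    have hx2 : ((a1-a3) - (a2-a4))^2 = 0 := by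
      linarith [sq_nonneg ((a1-a3) - (a2-a4)), sq_nonneg ((b1-b3) - (b2-b4))]
    have hy2 : ((b1-b3) - (b2-b4))^2 = 0 := by
      linarith [sq_nonneg ((a1-a3) - (a2-a4)), sq_nonneg ((b1-b3) - (b2-b4))]
    have h1 : (a1-a3) - (a2-a4) = 0 := by
      exact pow_eq_zero_iff (n := 2) (by norm_num) |>.1 hx2
    have h2 : (b1-b3) - (b2-b4) = 0 := by
      exact pow_eq_zero_iff (n := 2) (by norm_num) |>.1 hy2
    exact ⟨by linarith, by linarith, by linarith, by linarith⟩
  · right; right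
    have hw : ((a1-a3) + (a2-a4))^2 + ((b1-b3) + (b2-b4))^2 = 0 := by
      linear_combination -hR + 2*h
    have hx2 : ((a1-a3) + (a2-a4))^2 = 0 := by
      linarith [sq_nonneg ((a1-a3) + (a2-a4)), sq_nonneg ((b1-b3) + (b2-b4))]
    have hy2 : ((b1-b3) + (b2-b4))^2 = 0 := by
      linarith [sq_nonneg ((a1-a3) + (a2-a4)), sq_nonneg ((b1-b3) + (b2-b4))]
    have h1 : (a1-a3) + (a2-a4) = 0 := by
      exact pow_eq_zero_iff (n := 2) (by norm_num) |>.1 hx2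
    have h2 : (b1-b3) + (b2-b4) = 0 := by
      exact pow_eq_zero_iff (n := 2) (by norm_num) |>.1 hy2
    exact ⟨by linarith, by linarith, by linarith, by linarith⟩

lemma memA {z : EuclideanSpace ℝ (Fin 3)} (hz : z ∈ helixCurve) :
    z 2 ∈ Set.Icc (0:ℝ) (2*π) ∧
      ((z 0 = 1 ∧ z 1 = 0) ∨ (z 0 = Real.cos (z 2) ∧ z 1 = Real.sin (z 2))) := by
  rcases hz with ⟨t, ht, rfl⟩ | ⟨t, ht, rfl⟩
  · exact ⟨by simpa [helix] using ht, Or.inr ⟨by simp [helix], by simp [helix]⟩⟩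
  · exact ⟨by simpa [vseg] using ht, Or.inl ⟨by simp [vseg], by simp [vseg]⟩⟩

lemma sharedProj {z w : EuclideanSpace ℝ (Fin 3)} (hz : z ∈ helixCurve) (hw : w ∈ helixCurve)
    (h0 : z 0 = w 0) (h1 : z 1 = w 1) (hne : z ≠ w) : z 0 = 1 ∧ z 1 = 0 := by
  obtain ⟨⟨hz1, hz2⟩, hzt⟩ := memA hz
  obtain ⟨⟨hw1, hw2⟩, hwt⟩ := memA hw
  rcases hzt with ⟨p0, p1⟩ | ⟨p0, p1⟩
  · exact ⟨p0, p1⟩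
  rcases hwt with ⟨q0, q1⟩ | ⟨q0, q1⟩
  · exact ⟨h0.trans q0, h1.trans q1⟩
  have hcc : Real.cos (z 2) = Real.cos (w 2) := by rw [← p0, ← q0, h0]
  have hss : Real.sin (z 2) = Real.sin (w 2) := by rw [← p1, ← q1, h1]
  have hone : Real.cos (z 2 - w 2) = 1 := by
    rw [Real.cos_sub, hcc, hss]
    nlinarith [Real.cos_sq_add_sin_sq (w 2)]
  rcases cos_one_cases (by linarith) (by linarith) hone with h | h | h
  · exfalso
    apply hne
    have h2 : z 2 = w 2 := by linarith
    rw [vec3_ext z _ _ _ p0 p1 rfl, vec3_ext w _ _ _ q0 q1 rfl, h2]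
  · have hz2π : z 2 = 2*π := by linarith
    rw [p0, p1, hz2π]
    exact ⟨Real.cos_two_pi, Real.sin_two_pi⟩
  · have hz0 : z 2 = 0 := by linarith
    rw [p0, p1, hz0]; simp

lemma antipodal {z w : EuclideanSpace ℝ (Fin 3)} (hz : z ∈ helixCurve) (hw : w ∈ helixCurve)
    (h0 : z 0 + w 0 = 0) (h1 : z 1 + w 1 = 0) (hb : z 1 ≠ 0) :
    (z 0 = Real.cos (z 2) ∧ z 1 = Real.sin (z 2) ∧
     w 0 = Real.cos (w 2) ∧ w 1 = Real.sin (w 2)) ∧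
    (w 2 = z 2 + π ∨ w 2 = z 2 - π) := by
  obtain ⟨⟨hz1, hz2⟩, hzt⟩ := memA hz
  obtain ⟨⟨hw1, hw2⟩, hwt⟩ := memA hw
  rcases hzt with ⟨p0, p1⟩ | ⟨p0, p1⟩
  · exact absurd p1 hb
  rcases hwt with ⟨q0, q1⟩ | ⟨q0, q1⟩
  · exact absurd (by linarith [q1] : z 1 = 0) hb
  refine ⟨⟨p0, p1, q0, q1⟩, ?_⟩
  have hneg : Real.cos (w 2 - z 2) = -1 := by
    rw [Real.cos_sub]
    have e0 : Real.cos (w 2) = -Real.cos (z 2) := by rw [← p0, ← q0]; linarith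
    have e1 : Real.sin (w 2) = -Real.sin (z 2) := by rw [← p1, ← q1]; linarith
    rw [e0, e1]
    nlinarith [Real.cos_sq_add_sin_sq (z 2)]
  rcases cos_neg_one_cases (by linarith) (by linarith) hneg with h | h
  · left; linarith
  · right; linarith

lemma cos_eq_neg_one_Icc {c : ℝ} (h1 : 0 ≤ c) (h2 : c ≤ 2*π) (h : Real.cos c = -1) :
    c = π := by
  have hone : Real.cos (c - π) = 1 := by
    rw [Real.cos_sub, Real.cos_pi, Real.sin_pi, h]; ring
  have hπ := Real.pi_pos
  rcases cos_one_cases (by linarith) (by linarith) hone with h' | h' | h' <;> linarith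

lemma xpair {z w : EuclideanSpace ℝ (Fin 3)} (hz : z ∈ helixCurve) (hw : w ∈ helixCurve)
    (h0 : z 0 + w 0 = 0) (h1 : z 1 + w 1 = 0) (hb : z 1 = 0) :
    (z 0 = 1 ∧ z 1 = 0 ∧ w 0 = -1 ∧ w 1 = 0 ∧ w 2 = π) ∨
    (z 0 = -1 ∧ z 1 = 0 ∧ z 2 = π ∧ w 0 = 1 ∧ w 1 = 0) := by
  obtain ⟨⟨hz1, hz2⟩, hzt⟩ := memA hz
  obtain ⟨⟨hw1, hw2⟩, hwt⟩ := memA hw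
  have hwb : w 1 = 0 := by linarith
  have huz : z 0 = 1 ∨ z 0 = -1 := by
    have : (z 0 - 1) * (z 0 + 1) = 0 := by
      rcases hzt with ⟨p0, p1⟩ | ⟨p0, p1⟩
      · rw [p0]; ring
      · have := Real.cos_sq_add_sin_sq (z 2); rw [← p0, ← p1] at this
        nlinarith [this, hb]
    rcases mul_eq_zero.1 this with h | h
    · left; linarith
    · right; linarith
  rcases huz with h | h
  · left
    have hw0 : w 0 = -1 := by linarith
    refine ⟨h, hb, hw0, hwb, ?_⟩
    rcases hwt with ⟨q0, q1⟩ | ⟨q0, q1⟩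
    · exfalso; rw [q0] at hw0; norm_num at hw0
    · exact cos_eq_neg_one_Icc hw1 hw2 (by rw [← q0]; exact hw0)
  · right
    have hw0 : w 0 = 1 := by linarith
    refine ⟨h, hb, ?_, hw0, hwb⟩
    rcases hzt with ⟨p0, p1⟩ | ⟨p0, p1⟩
    · exfalso; rw [p0] at h; norm_num at h
    · exact cos_eq_neg_one_Icc hz1 hz2 (by rw [← p0]; exact h)

section perms
variable {α : Type*} (A B C D : α)
lemma perm_DABC : ({D, A, B, C} : Set α) = {A, B, C, D} := by
  ext x; simp only [Set.mem_insert_iff, Set.mem_singleton_iff]; tauto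
lemma perm_DCBA : ({D, C, B, A} : Set α) = {A, B, C, D} := by
  ext x; simp only [Set.mem_insert_iff, Set.mem_singleton_iff]; tauto
lemma perm_BADC : ({B, A, D, C} : Set α) = {A, B, C, D} := by
  ext x; simp only [Set.mem_insert_iff, Set.mem_singleton_iff]; tauto
lemma perm_BCDA : ({B, C, D, A} : Set α) = {A, B, C, D} := by
  ext x; simp only [Set.mem_insert_iff, Set.mem_singleton_iff]; tauto
lemma perm_ADCB : ({A, D, C, B} : Set α) = {A, B, C, D} := by
  ext x; simp only [Set.mem_insert_iff, Set.mem_singleton_iff]; tauto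
lemma perm_CDAB : ({C, D, A, B} : Set α) = {A, B, C, D} := by
  ext x; simp only [Set.mem_insert_iff, Set.mem_singleton_iff]; tauto
lemma perm_CBAD : ({C, B, A, D} : Set α) = {A, B, C, D} := by
  ext x; simp only [Set.mem_insert_iff, Set.mem_singleton_iff]; tauto
end perms

/-- The helix-plus-segment curve contains exactly one inscribed rhombus. -/
theorem helix_unique_rhombus :
    ((!₂[0, 1, π / 2] : EuclideanSpace ℝ (Fin 3)) ∈ helixCurve ∧
     (!₂[-1, 0, π] : EuclideanSpace ℝ (Fin 3)) ∈ helixCurve ∧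
     (!₂[0, -1, 3 * π / 2] : EuclideanSpace ℝ (Fin 3)) ∈ helixCurve ∧
     (!₂[1, 0, π] : EuclideanSpace ℝ (Fin 3)) ∈ helixCurve ∧
     IsRhombus !₂[0, 1, π / 2] !₂[-1, 0, π] !₂[0, -1, 3 * π / 2] !₂[1, 0, π]) ∧
    ∀ z₁ z₂ z₃ z₄ : EuclideanSpace ℝ (Fin 3),
      z₁ ∈ helixCurve → z₂ ∈ helixCurve → z₃ ∈ helixCurve → z₄ ∈ helixCurve →
      IsRhombus z₁ z₂ z₃ z₄ →
      ({z₁, z₂, z₃, z₄} : Set (EuclideanSpace ℝ (Fin 3))) =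
        {(!₂[0, 1, π / 2] : EuclideanSpace ℝ (Fin 3)), !₂[-1, 0, π],
         !₂[0, -1, 3 * π / 2], !₂[1, 0, π]} := by
  have hπ := Real.pi_pos
  constructor
  · refine ⟨?_, ?_, ?_, ?_, ?_⟩
    · exact Or.inl ⟨π/2, ⟨by positivity, by linarith⟩, by ext i; fin_cases i <;> simp [helix]⟩
    · exact Or.inl ⟨π, ⟨le_of_lt hπ, by linarith⟩, by ext i; fin_cases i <;> simp [helix]⟩
    · exact Or.inl ⟨3*π/2, ⟨by positivity, by linarith⟩,
        by ext i; fin_cases i <;> simp [helix, cos_3pi2, sin_3pi2]⟩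
    · exact Or.inr ⟨π, ⟨le_of_lt hπ, by linarith⟩, by ext i; fin_cases i <;> simp [vseg]⟩
    · refine ⟨?_, ?_, ?_, ?_, ?_, ?_, ?_, ?_⟩
      · intro h; have := congrFun (congrArg WithLp.ofLp h) 0; norm_num at this
      · intro h; have := congrFun (congrArg WithLp.ofLp h) 1; norm_num at this
      · intro h; have := congrFun (congrArg WithLp.ofLp h) 0; norm_num at this
      · intro h; have := congrFun (congrArg WithLp.ofLp h) 0; norm_num at this
      · intro h; have := congrFun (congrArg WithLp.ofLp h) 0; norm_num at this
      · intro h; have := congrFun (congrArg WithLp.ofLp h) 1; norm_num at this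
      · ext i; fin_cases i <;> simp [PiLp.add_apply] <;> ring
      · rw [EuclideanSpace.norm_eq, EuclideanSpace.norm_eq]
        congr 1
        rw [Fin.sum_univ_three, Fin.sum_univ_three]
        simp [PiLp.sub_apply, Real.norm_eq_abs, sq_abs]
        ring
  · intro z1 z2 z3 z4 m1 m2 m3 m4 hRh
    obtain ⟨n12, n13, n14, n23, n24, n34, hmid, hnorm⟩ := hRh
    obtain ⟨⟨l1, r1⟩, t1⟩ := memA m1
    obtain ⟨⟨l2, r2⟩, t2⟩ := memA m2
    obtain ⟨⟨l3, r3⟩, t3⟩ := memA m3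
    obtain ⟨⟨l4, r4⟩, t4⟩ := memA m4
    have u1 : z1 0 ^2 + z1 1 ^2 = 1 := by
      rcases t1 with ⟨p,q⟩|⟨p,q⟩ <;> rw [p,q]
      · norm_num
      · exact Real.cos_sq_add_sin_sq _
    have u2 : z2 0 ^2 + z2 1 ^2 = 1 := by
      rcases t2 with ⟨p,q⟩|⟨p,q⟩ <;> rw [p,q]
      · norm_num
      · exact Real.cos_sq_add_sin_sq _
    have u3 : z3 0 ^2 + z3 1 ^2 = 1 := by
      rcases t3 with ⟨p,q⟩|⟨p,q⟩ <;> rw [p,q]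
      · norm_num
      · exact Real.cos_sq_add_sin_sq _
    have u4 : z4 0 ^2 + z4 1 ^2 = 1 := by
      rcases t4 with ⟨p,q⟩|⟨p,q⟩ <;> rw [p,q]
      · norm_num
      · exact Real.cos_sq_add_sin_sq _
    have E1 : z1 0 + z3 0 = z2 0 + z4 0 := by simpa using congrFun (congrArg WithLp.ofLp hmid) 0
    have E2 : z1 1 + z3 1 = z2 1 + z4 1 := by simpa using congrFun (congrArg WithLp.ofLp hmid) 1
    have E3 : z1 2 + z3 2 = z2 2 + z4 2 := by simpa using congrFun (congrArg WithLp.ofLp hmid) 2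
    have hsq : (z1 0 - z2 0)^2 + (z1 1 - z2 1)^2 + (z1 2 - z2 2)^2
        = (z2 0 - z3 0)^2 + (z2 1 - z3 1)^2 + (z2 2 - z3 2)^2 := by
      have h2 : ‖z1 - z2‖^2 = ‖z2 - z3‖^2 := by rw [hnorm]
      rw [EuclideanSpace.norm_eq, EuclideanSpace.norm_eq] at h2
      rw [Real.sq_sqrt (by positivity), Real.sq_sqrt (by positivity)] at h2
      simpa [Fin.sum_univ_three, sq_abs] using h2
    have E4 : (z1 0 - z3 0)*(z2 0 - z4 0) + (z1 1 - z3 1)*(z2 1 - z4 1)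
        + (z1 2 - z3 2)*(z2 2 - z4 2) = 0 := by
      linear_combination (z1 0 - z3 0)*E1 + (z1 1 - z3 1)*E2 + (z1 2 - z3 2)*E3 - hsq
    rcases planar u1 u2 u3 u4 E1 E2 with ⟨hsx, hsy⟩ | ⟨pa, pb, pc, pd⟩ | ⟨pa, pb, pc, pd⟩
    · -- common midpoint on the axis
      have s24x : z2 0 + z4 0 = 0 := by linarith
      have s24y : z2 1 + z4 1 = 0 := by linarith
      by_cases hb1 : z1 1 = 0 <;> by_cases hb2 : z2 1 = 0
      · -- both diagonals on the x-axis plane : impossible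
        exfalso
        rcases xpair m1 m3 hsx hsy hb1 with ⟨_, _, w0, w1, w2⟩ | ⟨y0, y1, y2, _, _⟩ <;>
          rcases xpair m2 m4 s24x s24y hb2 with ⟨_, _, v0, v1, v2⟩ | ⟨x0, x1, x2, _, _⟩
        · exact n34 ((vec3_ext z3 _ _ _ w0 w1 w2).trans (vec3_ext z4 _ _ _ v0 v1 v2).symm)
        · exact n23 ((vec3_ext z2 _ _ _ x0 x1 x2).trans (vec3_ext z3 _ _ _ w0 w1 w2).symm)
        · exact n14 ((vec3_ext z1 _ _ _ y0 y1 y2).trans (vec3_ext z4 _ _ _ v0 v1 v2).symm)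
        · exact n12 ((vec3_ext z1 _ _ _ y0 y1 y2).trans (vec3_ext z2 _ _ _ x0 x1 x2).symm)
      · -- diag 1-3 on axis, diag 2-4 on helix
        obtain ⟨⟨c20, c21, c40, c41⟩, hε⟩ := antipodal m2 m4 s24x s24y hb2
        have hz40 : z4 0 = -Real.cos (z2 2) := by rw [← c20]; linarith
        have hz41 : z4 1 = -Real.sin (z2 2) := by rw [← c21]; linarith
        rcases xpair m1 m3 hsx hsy hb1 with ⟨z10, z11, z30, z31, z32⟩ | ⟨z10, z11, z12, z30, z31⟩
        · rcases hε with hε | hε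
          · -- z4 2 = z2 2 + π
            rw [z32, hε] at E3
            have hc1 : z1 2 = 2 * z2 2 := by linarith
            rw [z10, z11, z30, z31, z32, c20, hz40, hε, hc1] at E4
            have key : 4 * Real.cos (z2 2) = π * (2 * z2 2 - π) := by linear_combination E4
            have hc2 : z2 2 = π/2 := root1 key
            have hz1 : z1 = !₂[1, 0, π] := vec3_ext z1 _ _ _ z10 z11 (by rw [hc1, hc2]; ring)
            have hz3 : z3 = !₂[-1, 0, π] := vec3_ext z3 _ _ _ z30 z31 z32
            have hz2 : z2 = !₂[0, 1, π / 2] := vec3_ext z2 _ _ _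
              (by rw [c20, hc2]; exact Real.cos_pi_div_two)
              (by rw [c21, hc2]; exact Real.sin_pi_div_two) hc2
            have hz4 : z4 = !₂[0, -1, 3 * π / 2] := vec3_ext z4 _ _ _
              (by rw [hz40, hc2, Real.cos_pi_div_two]; ring)
              (by rw [hz41, hc2, Real.sin_pi_div_two])
              (by rw [hε, hc2]; ring)
            rw [hz1, hz2, hz3, hz4]
            exact perm_DABC _ _ _ _
          · -- z4 2 = z2 2 - π
            rw [z32, hε] at E3
            have hc1 : z1 2 = 2 * z2 2 - 2 * π := by linarith
            rw [z10, z11, z30, z31, z32, c20, hz40, hε, hc1] at E4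
            have key : 4 * Real.cos (z2 2) = π * (3 * π - 2 * z2 2) := by linear_combination E4
            have hc2 : z2 2 = 3*π/2 := root2 key
            have hz1 : z1 = !₂[1, 0, π] := vec3_ext z1 _ _ _ z10 z11 (by rw [hc1, hc2]; ring)
            have hz3 : z3 = !₂[-1, 0, π] := vec3_ext z3 _ _ _ z30 z31 z32
            have hz2 : z2 = !₂[0, -1, 3 * π / 2] := vec3_ext z2 _ _ _
              (by rw [c20, hc2]; exact cos_3pi2)
              (by rw [c21, hc2]; exact sin_3pi2) hc2
            have hz4 : z4 = !₂[0, 1, π / 2] := vec3_ext z4 _ _ _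
              (by rw [hz40, hc2, cos_3pi2]; ring)
              (by rw [hz41, hc2, sin_3pi2]; ring)
              (by rw [hε, hc2]; ring)
            rw [hz1, hz2, hz3, hz4]
            exact perm_DCBA _ _ _ _
        · rcases hε with hε | hε
          · rw [z12, hε] at E3
            have hc3 : z3 2 = 2 * z2 2 := by linarith
            rw [z10, z11, z30, z31, z12, c20, hz40, hε, hc3] at E4
            have key : 4 * Real.cos (z2 2) = π * (2 * z2 2 - π) := by linear_combination -E4
            have hc2 : z2 2 = π/2 := root1 key
            have hz1 : z1 = !₂[-1, 0, π] := vec3_ext z1 _ _ _ z10 z11 z12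
            have hz3 : z3 = !₂[1, 0, π] := vec3_ext z3 _ _ _ z30 z31 (by rw [hc3, hc2]; ring)
            have hz2 : z2 = !₂[0, 1, π / 2] := vec3_ext z2 _ _ _
              (by rw [c20, hc2]; exact Real.cos_pi_div_two)
              (by rw [c21, hc2]; exact Real.sin_pi_div_two) hc2
            have hz4 : z4 = !₂[0, -1, 3 * π / 2] := vec3_ext z4 _ _ _
              (by rw [hz40, hc2, Real.cos_pi_div_two]; ring)
              (by rw [hz41, hc2, Real.sin_pi_div_two])
              (by rw [hε, hc2]; ring)
            rw [hz1, hz2, hz3, hz4]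
            exact perm_BADC _ _ _ _
          · rw [z12, hε] at E3
            have hc3 : z3 2 = 2 * z2 2 - 2 * π := by linarith
            rw [z10, z11, z30, z31, z12, c20, hz40, hε, hc3] at E4
            have key : 4 * Real.cos (z2 2) = π * (3 * π - 2 * z2 2) := by linear_combination -E4
            have hc2 : z2 2 = 3*π/2 := root2 key
            have hz1 : z1 = !₂[-1, 0, π] := vec3_ext z1 _ _ _ z10 z11 z12
            have hz3 : z3 = !₂[1, 0, π] := vec3_ext z3 _ _ _ z30 z31 (by rw [hc3, hc2]; ring)
            have hz2 : z2 = !₂[0, -1, 3 * π / 2] := vec3_ext z2 _ _ _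
              (by rw [c20, hc2]; exact cos_3pi2)
              (by rw [c21, hc2]; exact sin_3pi2) hc2
            have hz4 : z4 = !₂[0, 1, π / 2] := vec3_ext z4 _ _ _
              (by rw [hz40, hc2, cos_3pi2]; ring)
              (by rw [hz41, hc2, sin_3pi2]; ring)
              (by rw [hε, hc2]; ring)
            rw [hz1, hz2, hz3, hz4]
            exact perm_BCDA _ _ _ _
      · -- diag 2-4 on axis, diag 1-3 on helix
        obtain ⟨⟨c10, c11, c30, c31⟩, hε⟩ := antipodal m1 m3 hsx hsy hb1
        have hz30 : z3 0 = -Real.cos (z1 2) := by rw [← c10]; linarith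
        have hz31 : z3 1 = -Real.sin (z1 2) := by rw [← c11]; linarith
        rcases xpair m2 m4 s24x s24y hb2 with ⟨z20, z21, z40, z41, z42⟩ | ⟨z20, z21, z22, z40, z41⟩
        · rcases hε with hε | hε
          · rw [z42, hε] at E3
            have hc2 : z2 2 = 2 * z1 2 := by linarith
            rw [z20, z21, z40, z41, z42, c10, hz30, hε, hc2] at E4
            have key : 4 * Real.cos (z1 2) = π * (2 * z1 2 - π) := by linear_combination E4
            have hc1 : z1 2 = π/2 := root1 key
            have hz2 : z2 = !₂[1, 0, π] := vec3_ext z2 _ _ _ z20 z21 (by rw [hc2, hc1]; ring)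
            have hz4 : z4 = !₂[-1, 0, π] := vec3_ext z4 _ _ _ z40 z41 z42
            have hz1 : z1 = !₂[0, 1, π / 2] := vec3_ext z1 _ _ _
              (by rw [c10, hc1]; exact Real.cos_pi_div_two)
              (by rw [c11, hc1]; exact Real.sin_pi_div_two) hc1
            have hz3 : z3 = !₂[0, -1, 3 * π / 2] := vec3_ext z3 _ _ _
              (by rw [hz30, hc1, Real.cos_pi_div_two]; ring)
              (by rw [hz31, hc1, Real.sin_pi_div_two])
              (by rw [hε, hc1]; ring)
            rw [hz1, hz2, hz3, hz4]
            exact perm_ADCB _ _ _ _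
          · rw [z42, hε] at E3
            have hc2 : z2 2 = 2 * z1 2 - 2 * π := by linarith
            rw [z20, z21, z40, z41, z42, c10, hz30, hε, hc2] at E4
            have key : 4 * Real.cos (z1 2) = π * (3 * π - 2 * z1 2) := by linear_combination E4
            have hc1 : z1 2 = 3*π/2 := root2 key
            have hz2 : z2 = !₂[1, 0, π] := vec3_ext z2 _ _ _ z20 z21 (by rw [hc2, hc1]; ring)
            have hz4 : z4 = !₂[-1, 0, π] := vec3_ext z4 _ _ _ z40 z41 z42
            have hz1 : z1 = !₂[0, -1, 3 * π / 2] := vec3_ext z1 _ _ _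
              (by rw [c10, hc1]; exact cos_3pi2)
              (by rw [c11, hc1]; exact sin_3pi2) hc1
            have hz3 : z3 = !₂[0, 1, π / 2] := vec3_ext z3 _ _ _
              (by rw [hz30, hc1, cos_3pi2]; ring)
              (by rw [hz31, hc1, sin_3pi2]; ring)
              (by rw [hε, hc1]; ring)
            rw [hz1, hz2, hz3, hz4]
            exact perm_CDAB _ _ _ _
        · rcases hε with hε | hε
          · rw [z22, hε] at E3
            have hc4 : z4 2 = 2 * z1 2 := by linarith
            rw [z20, z21, z40, z41, z22, c10, hz30, hε, hc4] at E4
            have key : 4 * Real.cos (z1 2) = π * (2 * z1 2 - π) := by linear_combination -E4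
            have hc1 : z1 2 = π/2 := root1 key
            have hz2 : z2 = !₂[-1, 0, π] := vec3_ext z2 _ _ _ z20 z21 z22
            have hz4 : z4 = !₂[1, 0, π] := vec3_ext z4 _ _ _ z40 z41 (by rw [hc4, hc1]; ring)
            have hz1 : z1 = !₂[0, 1, π / 2] := vec3_ext z1 _ _ _
              (by rw [c10, hc1]; exact Real.cos_pi_div_two)
              (by rw [c11, hc1]; exact Real.sin_pi_div_two) hc1
            have hz3 : z3 = !₂[0, -1, 3 * π / 2] := vec3_ext z3 _ _ _
              (by rw [hz30, hc1, Real.cos_pi_div_two]; ring)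
              (by rw [hz31, hc1, Real.sin_pi_div_two])
              (by rw [hε, hc1]; ring)
            rw [hz1, hz2, hz3, hz4]
          · rw [z22, hε] at E3
            have hc4 : z4 2 = 2 * z1 2 - 2 * π := by linarith
            rw [z20, z21, z40, z41, z22, c10, hz30, hε, hc4] at E4
            have key : 4 * Real.cos (z1 2) = π * (3 * π - 2 * z1 2) := by linear_combination -E4
            have hc1 : z1 2 = 3*π/2 := root2 key
            have hz2 : z2 = !₂[-1, 0, π] := vec3_ext z2 _ _ _ z20 z21 z22
            have hz4 : z4 = !₂[1, 0, π] := vec3_ext z4 _ _ _ z40 z41 (by rw [hc4, hc1]; ring)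
            have hz1 : z1 = !₂[0, -1, 3 * π / 2] := vec3_ext z1 _ _ _
              (by rw [c10, hc1]; exact cos_3pi2)
              (by rw [c11, hc1]; exact sin_3pi2) hc1
            have hz3 : z3 = !₂[0, 1, π / 2] := vec3_ext z3 _ _ _
              (by rw [hz30, hc1, cos_3pi2]; ring)
              (by rw [hz31, hc1, sin_3pi2]; ring)
              (by rw [hε, hc1]; ring)
            rw [hz1, hz2, hz3, hz4]
            exact perm_CBAD _ _ _ _
      · -- both diagonals on the helix : impossible
        exfalso
        obtain ⟨⟨c10, c11, c30, c31⟩, hε1⟩ := antipodal m1 m3 hsx hsy hb1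
        obtain ⟨⟨c20, c21, c40, c41⟩, hε2⟩ := antipodal m2 m4 s24x s24y hb2
        rcases hε1 with h1 | h1 <;> rcases hε2 with h2 | h2
        · rw [h1, h2] at E3
          have h : z1 2 = z2 2 := by linarith
          exact n12 (by rw [vec3_ext z1 _ _ _ c10 c11 rfl, vec3_ext z2 _ _ _ c20 c21 rfl, h])
        · rw [h1, h2] at E3
          have h : z3 2 = z2 2 := by linarith
          exact n23 (by rw [vec3_ext z2 _ _ _ c20 c21 rfl, vec3_ext z3 _ _ _ c30 c31 rfl, h])
        · rw [h1, h2] at E3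
          have h : z3 2 = z2 2 := by linarith
          exact n23 (by rw [vec3_ext z2 _ _ _ c20 c21 rfl, vec3_ext z3 _ _ _ c30 c31 rfl, h])
        · rw [h1, h2] at E3
          have h : z1 2 = z2 2 := by linarith
          exact n12 (by rw [vec3_ext z1 _ _ _ c10 c11 rfl, vec3_ext z2 _ _ _ c20 c21 rfl, h])
    · -- shared projections z1~z2, z3~z4 : impossible
      exfalso
      obtain ⟨q1a, q1b⟩ := sharedProj m1 m2 pa pb n12
      obtain ⟨q3a, q3b⟩ := sharedProj m3 m4 pc pd n34
      have q2a : z2 0 = 1 := by rw [← pa]; exact q1a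
      have q2b : z2 1 = 0 := by rw [← pb]; exact q1b
      have q4a : z4 0 = 1 := by rw [← pc]; exact q3a
      have q4b : z4 1 = 0 := by rw [← pd]; exact q3b
      rw [q1a, q1b, q2a, q2b, q3a, q3b, q4a, q4b] at E4
      have h0 : (z1 2 - z3 2) * (z2 2 - z4 2) = 0 := by linear_combination E4
      rcases mul_eq_zero.1 h0 with h | h
      · have h' : z1 2 = z3 2 := by linarith
        exact n13 (by rw [vec3_ext z1 _ _ _ q1a q1b rfl, vec3_ext z3 _ _ _ q3a q3b rfl, h'])
      · have h' : z2 2 = z4 2 := by linarith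
        exact n24 (by rw [vec3_ext z2 _ _ _ q2a q2b rfl, vec3_ext z4 _ _ _ q4a q4b rfl, h'])
    · -- shared projections z1~z4, z3~z2 : impossible
      exfalso
      obtain ⟨q1a, q1b⟩ := sharedProj m1 m4 pa pb n14
      obtain ⟨q3a, q3b⟩ := sharedProj m3 m2 pc pd (Ne.symm n23)
      have q4a : z4 0 = 1 := by rw [← pa]; exact q1a
      have q4b : z4 1 = 0 := by rw [← pb]; exact q1b
      have q2a : z2 0 = 1 := by rw [← pc]; exact q3a
      have q2b : z2 1 = 0 := by rw [← pd]; exact q3b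
      rw [q1a, q1b, q2a, q2b, q3a, q3b, q4a, q4b] at E4
      have h0 : (z1 2 - z3 2) * (z2 2 - z4 2) = 0 := by linear_combination E4
      rcases mul_eq_zero.1 h0 with h | h
      · have h' : z1 2 = z3 2 := by linarith
        exact n13 (by rw [vec3_ext z1 _ _ _ q1a q1b rfl, vec3_ext z3 _ _ _ q3a q3b rfl, h'])
      · have h' : z2 2 = z4 2 := by linarith
        exact n24 (by rw [vec3_ext z2 _ _ _ q2a q2b rfl, vec3_ext z4 _ _ _ q4a q4b rfl, h'])
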